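/- For all real numbers a > 0, b > 0 and r > 2, one has the strict inequality a^r + r·a^{r−1}·b + b^r < (a + b)^r; equivalently, for r > 2 the function f(t) = (1 + r·t + t^r)/(1 + t)^r satisfies f(t) < 1 for all t > 0, with f(0) = 1 and f(t) → 1 as t → +∞. -/

import Mathlib

open Set MeasureTheory Filter

/-- The conjugate exponent `p' = p/(p-1)`. -/
noncomputable def pconj (p : ℝ) : ℝ := p / (p - 1)

/-- The constant `k(p)` from the paper. -/
noncomputable def kfun (p : ℝ) : ℝ :=
  if p < 2 then 1 / (2 ^ (pconj p - 1) - 1)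
  else if p = 2 then 1
  else pconj p / (pconj p - 1 +
    (1 + pconj p * (pconj p - 1) ^ ((1 : ℝ) / (pconj p - 2)) +
      (pconj p - 1) ^ (pconj p / (pconj p - 2))) /
    (1 + (pconj p - 1) ^ ((1 : ℝ) / (pconj p - 2))) ^ pconj p)

/-- Standing assumptions on the data `p, θ, D, H, h, g` (combustion setting). -/
structure CombSetup (p θ : ℝ) (D H h g : ℝ → ℝ) : Prop where
  hp : 1 < p
  hθ0 : 0 < θ
  hθ1 : θ < 1
  hD : ContDiffOn ℝ 1 D (Ioo 0 1)
  hDpos : ∀ v ∈ Ioo (0 : ℝ) 1, 0 < D v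
  hH : ContDiffOn ℝ 1 H (Icc 0 1)
  hH0 : H 0 = 0
  hh : ContinuousOn h (Icc 0 1)
  hHd : ∀ v ∈ Icc (0 : ℝ) 1, HasDerivWithinAt H (h v) (Icc 0 1) v
  hgc : ContinuousOn g (Icc 0 1)
  hg0 : ∀ v ∈ Icc (0 : ℝ) θ, g v = 0
  hgpos : ∀ v ∈ Ioo θ 1, 0 < g v
  hg1 : g 1 = 0
  hInt : IntegrableOn (fun v => D v ^ (pconj p - 1) * g v) (Ioo 0 1)

/-- The diffusive flux `ξ ↦ D(u(ξ)) |u'(ξ)|^{p-2} u'(ξ)`. -/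
noncomputable def flux (p : ℝ) (D u : ℝ → ℝ) : ℝ → ℝ :=
  fun ξ => D (u ξ) * (|deriv u ξ| ^ (p - 2) * deriv u ξ)

/-- Solution of the traveling-wave problem with speed `c`. -/
structure IsTWSol (p c : ℝ) (D h g : ℝ → ℝ) (u : ℝ → ℝ) : Prop where
  cont : Continuous u
  mem : ∀ ξ, u ξ ∈ Icc (0 : ℝ) 1
  smooth : ContDiffOn ℝ 1 u {ξ | u ξ ∈ Ioo (0 : ℝ) 1}
  eqn : ∀ ξ ∈ {ξ | u ξ ∈ Ioo (0 : ℝ) 1},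
    HasDerivAt (flux p D u) (-(c + h (u ξ)) * deriv u ξ - g (u ξ)) ξ
  flux_cont : Continuous (fun ξ => if u ξ ∈ Ioo (0 : ℝ) 1 then flux p D u ξ else 0)
  flux_to0 : ∀ ε > 0, ∃ δ > 0, ∀ ξ, u ξ ∈ Ioo (0 : ℝ) 1 → u ξ < δ → |flux p D u ξ| < ε
  flux_to1 : ∀ ε > 0, ∃ δ > 0, ∀ ξ, u ξ ∈ Ioo (0 : ℝ) 1 → 1 - δ < u ξ → |flux p D u ξ| < ε
  lim_bot : Tendsto u atBot (nhds 1)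
  lim_top : Tendsto u atTop (nhds 0)

/-- Positive solution of the first-order problem with parameter `c`. -/
structure IsFOSol (p c : ℝ) (D h g : ℝ → ℝ) (y : ℝ → ℝ) : Prop where
  cont : ContinuousOn y (Icc 0 1)
  eqn : ∀ v ∈ Ioo (0 : ℝ) 1, HasDerivAt y
    (pconj p * ((c + h v) * (max (y v) 0) ^ (1 / p) - D v ^ (pconj p - 1) * g v)) v
  y0 : y 0 = 0
  y1 : y 1 = 0
  pos : ∀ v ∈ Ioo (0 : ℝ) 1, 0 < y v

/-- Strict technical inequality for `r > 2`.
For `a, b > 0` and `r > 2`: `a^r + r a^{r-1} b + b^r < (a+b)^r`; equivalently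
`f(t) = (1 + r t + t^r)/(1+t)^r < 1` for `t > 0`, with `f(0) = 1` and `f(t) → 1`
as `t → +∞`. -/
private lemma superadd (s : ℝ) (hs : 1 < s) (t : ℝ) (ht : 0 < t) :
    1 + t ^ s < (1 + t) ^ s := by
  have h1t : (0:ℝ) < 1 + t := by linarith
  have e1 : (1+t) ^ s = (1+t) ^ (s-1) + t * (1+t) ^ (s-1) := by
    rw [show s = (s-1) + 1 by ring, Real.rpow_add h1t, Real.rpow_one]; ring
  have e2 : t ^ s = t * t ^ (s-1) := by
    rw [show s = (s-1) + 1 by ring, Real.rpow_add ht, Real.rpow_one]; ring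
  have h3 : 1 < (1+t) ^ (s-1) :=
    Real.one_lt_rpow_iff_of_pos h1t |>.mpr (Or.inl ⟨by linarith, by linarith⟩)
  have h4 : t ^ (s-1) < (1+t) ^ (s-1) :=
    Real.rpow_lt_rpow ht.le (by linarith) (by linarith)
  have h5 := mul_lt_mul_of_pos_left h4 ht
  linarith

private lemma key14 (r : ℝ) (hr : 2 < r) (t : ℝ) (ht : 0 < t) :
    1 + r * t + t ^ r < (1 + t) ^ r := by
  set f : ℝ → ℝ := fun t => (1+t) ^ r - (1 + r * t + t ^ r) with hf
  have hcont : ContinuousOn f (Ici 0) := by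
    apply ContinuousOn.sub
    · exact ((continuousOn_const.add continuousOn_id).rpow_const
        (fun x hx => Or.inl (by have : (0:ℝ) ≤ x := hx; show (1:ℝ) + x ≠ 0; positivity)))
    · exact (continuousOn_const.add (continuousOn_const.mul continuousOn_id)).add
        (continuousOn_id.rpow_const (fun x _ => Or.inr (by linarith)))
  have hderiv : ∀ t ∈ interior (Ici (0:ℝ)), 0 < deriv f t := by
    intro t htt
    rw [interior_Ici] at htt
    have ht0 : (0:ℝ) < t := htt
    have h1t : (0:ℝ) < 1 + t := by linarith
    have hd1 : HasDerivAt (fun x : ℝ => (1+x) ^ r) (r * (1+t) ^ (r-1)) t := by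
      have h := (Real.hasDerivAt_rpow_const (x := 1+t) (p := r) (Or.inl h1t.ne')).comp t
        ((hasDerivAt_id t).const_add 1)
      simpa [Function.comp_def] using h
    have hd2 : HasDerivAt (fun x : ℝ => x ^ r) (r * t ^ (r-1)) t :=
      Real.hasDerivAt_rpow_const (Or.inl ht0.ne')
    have hd : HasDerivAt f (r * (1+t) ^ (r-1) - (0 + r * 1 + r * t ^ (r-1))) t := by
      exact hd1.sub ((hasDerivAt_const t 1).add
        ((hasDerivAt_id t).const_mul r) |>.add hd2)
    rw [hd.deriv]
    have hs := superadd (r-1) (by linarith) t ht0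
    nlinarith
  have hmono : StrictMonoOn f (Ici 0) :=
    strictMonoOn_of_deriv_pos (convex_Ici 0) hcont hderiv
  have h := hmono (Set.mem_Ici.mpr le_rfl) (le_of_lt ht : (0:ℝ) ≤ t) ht
  have hf0 : f 0 = 0 := by
    simp [hf, Real.zero_rpow (by linarith : r ≠ 0), Real.one_rpow]
  rw [hf0] at h
  simp only [hf] at h
  linarith

theorem stmt14 (r : ℝ) (hr : 2 < r) :
    (∀ a b : ℝ, 0 < a → 0 < b →
        a ^ r + r * a ^ (r - 1) * b + b ^ r < (a + b) ^ r) ∧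
    (∀ t : ℝ, 0 < t → (1 + r * t + t ^ r) / (1 + t) ^ r < 1) ∧
    (1 + r * (0 : ℝ) + (0 : ℝ) ^ r) / (1 + (0 : ℝ)) ^ r = 1 ∧
    Tendsto (fun t : ℝ => (1 + r * t + t ^ r) / (1 + t) ^ r) atTop (nhds 1) := by
  have hr0 : (0:ℝ) < r := by linarith
  refine ⟨?_, ?_, ?_, ?_⟩
  · intro a b ha hb
    have ht : (0:ℝ) < b / a := by positivity
    have h := key14 r hr (b/a) ht
    have har : (0:ℝ) < a ^ r := Real.rpow_pos_of_pos ha r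
    have h2 := mul_lt_mul_of_pos_left h har
    have e1 : a ^ r * ((1 + b/a) ^ r) = (a + b) ^ r := by
      rw [← Real.mul_rpow ha.le (by positivity)]
      congr 1; field_simp
    have e2 : a ^ r * (b/a) ^ r = b ^ r := by
      rw [← Real.mul_rpow ha.le ht.le]
      congr 1; field_simp
    have e3 : a ^ r * (r * (b/a)) = r * a ^ (r-1) * b := by
      have h' : a ^ (r-1) * a = a ^ r := by
        have := Real.rpow_add ha (r-1) 1
        rw [Real.rpow_one, show r-1+1 = r by ring] at this
        linarith
      rw [← h']; field_simp
    calc a ^ r + r * a ^ (r-1) * b + b ^ r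
        = a ^ r * (1 + r * (b/a) + (b/a) ^ r) := by rw [mul_add, mul_add, e2, e3, mul_one]
      _ < a ^ r * ((1 + b/a) ^ r) := h2
      _ = (a + b) ^ r := e1
  · intro t ht
    have h1t : (0:ℝ) < 1 + t := by linarith
    rw [div_lt_one (Real.rpow_pos_of_pos h1t r)]
    exact key14 r hr t ht
  · simp [Real.zero_rpow hr0.ne', Real.one_rpow]
  · have hlim1 : Tendsto (fun t : ℝ => (1 + r * t) / (1 + t) ^ r) atTop (nhds 0) := by
      have hbound : ∀ᶠ t in atTop, (1 + r * t) / (1 + t) ^ r ≤ (1 + r) * t ^ (-(r-1)) := by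
        filter_upwards [eventually_ge_atTop (1:ℝ)] with t ht1
        have ht0 : (0:ℝ) < t := by linarith
        have h1t : (0:ℝ) < 1 + t := by linarith
        have hnum : 1 + r * t ≤ (1 + r) * t := by nlinarith
        have hden : t ^ r ≤ (1 + t) ^ r := Real.rpow_le_rpow ht0.le (by linarith) hr0.le
        have htr : (0:ℝ) < t ^ r := Real.rpow_pos_of_pos ht0 r
        calc (1 + r * t) / (1 + t) ^ r ≤ ((1 + r) * t) / t ^ r :=
              div_le_div₀ (by positivity) hnum htr hden
          _ = (1 + r) * t ^ (-(r-1)) := by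
              rw [mul_div_assoc]
              congr 1
              have := Real.rpow_sub ht0 1 r
              rw [Real.rpow_one, show (1:ℝ)-r = -(r-1) by ring] at this
              linarith
      have hpos : ∀ᶠ t in atTop, 0 ≤ (1 + r * t) / (1 + t) ^ r := by
        filter_upwards [eventually_ge_atTop (0:ℝ)] with t ht0
        have h1t : (0:ℝ) < 1 + t := by linarith
        positivity
      have hto0 : Tendsto (fun t : ℝ => (1 + r) * t ^ (-(r-1))) atTop (nhds 0) := by
        have := (tendsto_rpow_neg_atTop (by linarith : (0:ℝ) < r - 1)).const_mul (1 + r)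
        simpa using this
      exact squeeze_zero' hpos hbound hto0
    have hlim2 : Tendsto (fun t : ℝ => t ^ r / (1 + t) ^ r) atTop (nhds 1) := by
      have hfrac : Tendsto (fun t : ℝ => t / (1 + t)) atTop (nhds 1) := by
        have : Tendsto (fun t : ℝ => 1 - 1 / (1 + t)) atTop (nhds (1 - 0)) := by
          apply Tendsto.const_sub
          exact tendsto_const_nhds.div_atTop (tendsto_atTop_add_const_left _ 1 tendsto_id)
        rw [sub_zero] at this
        apply this.congr'
        filter_upwards [eventually_gt_atTop (0:ℝ)] with t ht0
        field_simp
        ring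
      have hc : Tendsto (fun x : ℝ => x ^ r) (nhds 1) (nhds 1) := by
        have := (Real.continuousAt_rpow_const 1 r (Or.inl one_ne_zero)).tendsto
        simpa [Real.one_rpow] using this
      have := hc.comp hfrac
      apply this.congr'
      filter_upwards [eventually_gt_atTop (0:ℝ)] with t ht0
      have h1t : (0:ℝ) < 1 + t := by linarith
      simp only [Function.comp]
      rw [Real.div_rpow ht0.le h1t.le]
    have := hlim1.add hlim2
    rw [zero_add] at this
    apply this.congr'
    filter_upwards [eventually_gt_atTop (0:ℝ)] with t ht0
    rw [← add_div]
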